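/- For every integer k ≥ 2 and all distinct r, r' ∈ {0, 1, 2}, the dominating set D_r = { i ∈ ℤ/3kℤ : i ≡ r (mod 3) } of the cycle C_{3k} is not TS-reachable from D_{r'}; in particular, no single token slide transforms D_{r'} into D_r while keeping a dominating multiset, and the three sets D_0, D_1, D_2 lie in pairwise distinct connected components of the token-sliding reconfiguration graph of size-k dominating multisets of C_{3k}. -/

import Mathlib

def IsDominatingMultiset {V : Type*} (G : SimpleGraph V) (D : Multiset V) : Prop :=
  ∀ w : V, w ∈ D ∨ ∃ u ∈ D, G.Adj u w

def TokenSlide {V : Type*} [DecidableEq V] (G : SimpleGraph V) (D D' : Multiset V) : Prop :=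
  ∃ u v : V, G.Adj u v ∧ u ∈ D ∧ D' = v ::ₘ D.erase u

def TSStep {V : Type*} [DecidableEq V] (G : SimpleGraph V) (D D' : Multiset V) : Prop :=
  IsDominatingMultiset G D ∧ IsDominatingMultiset G D' ∧ TokenSlide G D D'

def TSReachable {V : Type*} [DecidableEq V] (G : SimpleGraph V) (D D' : Multiset V) : Prop :=
  Relation.ReflTransGen (TSStep G) D D'

def cycleGraph (n : ℕ) : SimpleGraph (ZMod n) where
  Adj i j := i ≠ j ∧ (i - j = 1 ∨ j - i = 1)
  symm := by
    refine ⟨fun i j hij => ?_⟩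
    exact ⟨hij.1.symm, hij.2.symm⟩
  loopless := by
    refine ⟨fun i hi => ?_⟩
    exact hi.1 rfl

def Dres (k r : ℕ) [NeZero (3 * k)] : Multiset (ZMod (3 * k)) :=
  (Finset.univ.filter fun i : ZMod (3 * k) => i.val % 3 = r).val

lemma mem_Dres_iff (k : ℕ) [NeZero (3 * k)] (r : ℕ) (hr : r < 3) (i : ZMod (3 * k)) :
    i ∈ Dres k r ↔ ZMod.castHom (dvd_mul_right 3 k) (ZMod 3) i = (r : ZMod 3) := by
  simp only [Dres, Finset.mem_val, Finset.mem_filter, Finset.mem_univ, true_and]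
  rw [ZMod.castHom_apply, ← ZMod.natCast_val, ZMod.natCast_eq_natCast_iff']
  omega

lemma slide_bad (k : ℕ) (hk : 2 ≤ k) [NeZero (3 * k)] (r' : ℕ) (hr' : r' < 3)
    (u e : ZMod (3 * k)) (he : e = 1 ∨ e = -1) (hu : u ∈ Dres k r') :
    ¬ IsDominatingMultiset (cycleGraph (3 * k)) ((u + e) ::ₘ (Dres k r').erase u) := by
  intro hdom
  set f := ZMod.castHom (dvd_mul_right 3 k) (ZMod 3) with hf
  have h3 : (3 : ZMod (3 * k)) ≠ 0 := by
    intro h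
    have h' : ((3 : ℕ) : ZMod (3 * k)) = 0 := by exact_mod_cast h
    rw [ZMod.natCast_eq_zero_iff] at h'
    have := Nat.le_of_dvd (by norm_num) h'
    omega
  have hnd : (Dres k r').Nodup := (Finset.univ.filter _).nodup
  have memD : ∀ x ∈ (Dres k r').erase u, x ≠ u ∧ f x = f u := by
    intro x hx
    rw [hnd.mem_erase_iff] at hx
    refine ⟨hx.1, ?_⟩
    rw [(mem_Dres_iff k r' hr' x).mp hx.2, (mem_Dres_iff k r' hr' u).mp hu]
  rcases he with he | he <;> subst he
  · -- e = 1, undominated vertex u - 1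
    rcases hdom (u - 1) with hw | ⟨x, hx, hadj⟩
    · rcases Multiset.mem_cons.mp hw with h | h
      · -- u - 1 = u + 1
        have h2 : (2 : ZMod (3 * k)) = 0 := by linear_combination -h
        have h2' := congrArg f h2
        simp only [map_ofNat, map_zero] at h2'
        exact absurd h2' (by decide)
      · obtain ⟨-, hmem⟩ := memD _ h
        rw [map_sub, map_one] at hmem
        have : (1 : ZMod 3) = 0 := by linear_combination -hmem
        exact absurd this (by decide)
    · rcases hadj.2 with h | h <;> rcases Multiset.mem_cons.mp hx with hxv | hxm
      · -- x = u + 1, x - (u - 1) = 1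
        subst hxv
        exact h3 (by linear_combination 3 * h)
      · -- x ∈ erase, x - (u - 1) = 1 → x = u
        obtain ⟨hne, -⟩ := memD _ hxm
        exact hne (by linear_combination h)
      · -- x = u + 1, (u - 1) - x = 1
        subst hxv
        exact h3 (by linear_combination -h)
      · -- x ∈ erase, (u - 1) - x = 1 → x = u - 2
        obtain ⟨-, hmem⟩ := memD _ hxm
        have h' := congrArg f h
        simp only [map_sub, map_one] at h'
        rw [hmem] at h'
        have : (2 : ZMod 3) = 0 := by linear_combination -h'
        exact absurd this (by decide)
  · -- e = -1, undominated vertex u + 1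
    rcases hdom (u - (-1)) with hw | ⟨x, hx, hadj⟩
    · rcases Multiset.mem_cons.mp hw with h | h
      · have h2 : (2 : ZMod (3 * k)) = 0 := by linear_combination h
        have h2' := congrArg f h2
        simp only [map_ofNat, map_zero] at h2'
        exact absurd h2' (by decide)
      · obtain ⟨-, hmem⟩ := memD _ h
        rw [map_sub, map_neg, map_one] at hmem
        have : (1 : ZMod 3) = 0 := by linear_combination hmem
        exact absurd this (by decide)
    · rcases hadj.2 with h | h <;> rcases Multiset.mem_cons.mp hx with hxv | hxm
      · subst hxv
        exact h3 (by linear_combination -h)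
      · obtain ⟨-, hmem⟩ := memD _ hxm
        have h' := congrArg f h
        simp only [map_sub, map_neg, map_one] at h'
        rw [hmem] at h'
        have : (2 : ZMod 3) = 0 := by linear_combination -h'
        exact absurd this (by decide)
      · subst hxv
        exact h3 (by linear_combination 3 * h)
      · obtain ⟨hne, -⟩ := memD _ hxm
        exact hne (by linear_combination -h)

lemma Dres_ne (k : ℕ) [NeZero (3 * k)] (hk : 2 ≤ k) (r r' : ℕ) (hr : r < 3) (hr' : r' < 3)
    (hne : r ≠ r') : Dres k r' ≠ Dres k r := by
  intro h
  have h1 : ((r' : ℕ) : ZMod (3 * k)) ∈ Dres k r' := by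
    rw [mem_Dres_iff k r' hr', map_natCast]
  rw [h, mem_Dres_iff k r hr, map_natCast, ZMod.natCast_eq_natCast_iff'] at h1
  omega

/-- For `k ≥ 2` and distinct `r, r' ∈ {0,1,2}`, the dominating set `D_r` of `C_{3k}` is
not TS-reachable from `D_{r'}`; in particular no single token slide transforms `D_{r'}`
into `D_r` while keeping a dominating multiset. -/
theorem cycle_not_TSReachable (k : ℕ) (hk : 2 ≤ k) [NeZero (3 * k)]
    (r r' : ℕ) (hr : r < 3) (hr' : r' < 3) (hne : r ≠ r') :
    ¬ TSReachable (cycleGraph (3 * k)) (Dres k r') (Dres k r) ∧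
    ¬ (TokenSlide (cycleGraph (3 * k)) (Dres k r') (Dres k r) ∧
        IsDominatingMultiset (cycleGraph (3 * k)) (Dres k r)) := by
  have hbad : ∀ D' : Multiset (ZMod (3 * k)),
      TokenSlide (cycleGraph (3 * k)) (Dres k r') D' →
      ¬ IsDominatingMultiset (cycleGraph (3 * k)) D' := by
    rintro D' ⟨u, v, hadj, hu, hD'⟩
    rcases hadj.2 with h | h
    · have hv : v = u + (-1) := by linear_combination -h
      rw [hD', hv]
      exact slide_bad k hk r' hr' u (-1) (Or.inr rfl) hu
    · have hv : v = u + 1 := by linear_combination h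
      rw [hD', hv]
      exact slide_bad k hk r' hr' u 1 (Or.inl rfl) hu
  constructor
  · intro h
    rcases Relation.ReflTransGen.cases_head h with heq | ⟨c, hstep, -⟩
    · exact Dres_ne k hk r r' hr hr' hne heq
    · exact hbad c hstep.2.2 hstep.2.1
  · rintro ⟨hts, hdom⟩
    exact hbad _ hts hdom
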